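/- Let G be a tree on state nodes with m input nodes, and suppose G decomposes into m vertex-disjoint path components G₁,...,G_m, each with exactly one input node attached at a terminal node of its path, such that consecutive components are joined by exactly one bridge edge. Then G is strongly sign controllable: for every α ⊆ V_S \ N(V_I), the set N(α)\α contains a dedicated node. -/
import Mathlib


open scoped Classical

/-- Dedicated node of `α` in `G`: not in `α`, exactly one neighbor in `α`. -/
def ded {V : Type} (G : SimpleGraph V) (α : Finset V) (v : V) : Prop :=
  v ∉ α ∧ (α.filter (G.Adj v)).card = 1

/-- A tree built from `m` path components: component `i < m` has state nodes
`(i, a)` for `a < n i`, carrying path edges; component `i` has one input node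
(`Sum.inr i`) attached at the node `(i, t i)`; consecutive components `i` and
`i+1` are joined by exactly one bridge edge `(i, p i) — (i+1, q i)`. -/
def chainPaths (m : ℕ) (n t p q : ℕ → ℕ) : SimpleGraph ((ℕ × ℕ) ⊕ ℕ) :=
  SimpleGraph.fromRel (fun x y =>
    match x, y with
    | Sum.inl (i, a), Sum.inl (j, b) =>
        (i = j ∧ i < m ∧ a + 1 = b ∧ b < n i) ∨
        (j = i + 1 ∧ j < m ∧ a = p i ∧ b = q i)
    | Sum.inr u, Sum.inl (j, a) => u = j ∧ j < m ∧ a = t j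
    | _, _ => False)

private lemma ded_of {V : Type} {G : SimpleGraph V} {α : Finset V} {v w : V}
    (hv : v ∉ α) (hw : w ∈ α) (ha : G.Adj v w)
    (hu : ∀ x ∈ α, G.Adj v x → x = w) : ded G α v := by
  refine ⟨hv, ?_⟩
  have hs : α.filter (G.Adj v) = {w} := by
    apply Finset.eq_singleton_iff_unique_mem.2
    refine ⟨Finset.mem_filter.2 ⟨hw, ha⟩, ?_⟩
    intro x hx
    rcases Finset.mem_filter.1 hx with ⟨h1, h2⟩
    exact hu x h1 h2
  rw [hs, Finset.card_singleton]

private lemma chain_adj_cases {m : ℕ} {n t p q : ℕ → ℕ} {i a j b : ℕ}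
    (h : (chainPaths m n t p q).Adj (Sum.inl (i,a)) (Sum.inl (j,b))) :
    ((i = j ∧ i < m ∧ a + 1 = b ∧ b < n i) ∨ (j = i+1 ∧ j < m ∧ a = p i ∧ b = q i)) ∨
    ((j = i ∧ j < m ∧ b + 1 = a ∧ a < n j) ∨ (i = j + 1 ∧ i < m ∧ b = p j ∧ a = q j)) := by
  rw [chainPaths, SimpleGraph.fromRel_adj] at h
  exact h.2

private lemma chain_adj_step {m : ℕ} {n t p q : ℕ → ℕ} {i a b : ℕ}
    (him : i < m) (hab : a + 1 = b) (hbn : b < n i) :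
    (chainPaths m n t p q).Adj (Sum.inl (i,a)) (Sum.inl (i,b)) := by
  rw [chainPaths, SimpleGraph.fromRel_adj]
  refine ⟨by simp; omega, Or.inl (Or.inl ⟨rfl, him, hab, hbn⟩)⟩

theorem stmt6 (m : ℕ) (hm : 1 ≤ m) (n t p q : ℕ → ℕ)
    (hn : ∀ i < m, 1 ≤ n i)
    -- each input node is attached at a terminal node of its path
    (ht : ∀ i < m, t i = 0 ∨ t i = n i - 1)
    -- bridge endpoints are genuine nodes of the respective components
    (hp : ∀ i, i + 1 < m → p i < n i)
    (hq : ∀ i, i + 1 < m → q i < n (i + 1)) :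
    -- G is strongly sign controllable: every nonempty α ⊆ V_S \ N(V_I)
    -- admits a dedicated node
    ∀ α ⊆ ((((Finset.range m).biUnion
            (fun i => (Finset.range (n i)).image (fun a => (i, a)))).image
              Sum.inl : Finset ((ℕ × ℕ) ⊕ ℕ)) \
          ((Finset.range m).image (fun i => Sum.inl (i, t i)))),
      α.Nonempty → ∃ v, ded (chainPaths m n t p q) α v := by
  intro α hα hαne
  -- membership facts
  have hmem : ∀ w ∈ α, ∃ i a, w = Sum.inl (i, a) ∧ i < m ∧ a < n i ∧ a ≠ t i := by
    intro w hw
    have h := hα hw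
    rw [Finset.mem_sdiff] at h
    obtain ⟨h1, h2⟩ := h
    rw [Finset.mem_image] at h1
    obtain ⟨x, hx, rfl⟩ := h1
    rw [Finset.mem_biUnion] at hx
    obtain ⟨i, hi, hx⟩ := hx
    rw [Finset.mem_image] at hx
    obtain ⟨a, ha, rfl⟩ := hx
    refine ⟨i, a, rfl, Finset.mem_range.1 hi, Finset.mem_range.1 ha, ?_⟩
    intro hat
    apply h2
    rw [Finset.mem_image]
    exact ⟨i, hi, by rw [hat]⟩
  have hmem' : ∀ i a, Sum.inl (i, a) ∈ α → i < m ∧ a < n i ∧ a ≠ t i := by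
    intro i a hia
    obtain ⟨i', a', heq, h1, h2, h3⟩ := hmem _ hia
    have hi : i = i' := by injection heq with h; exact (congrArg Prod.fst h)
    have ha : a = a' := by injection heq with h; exact (congrArg Prod.snd h)
    subst hi; subst ha; exact ⟨h1, h2, h3⟩
  -- key induction over the component index
  have key : ∀ i, (∃ a, Sum.inl (i, a) ∈ α) →
      (Sum.inl (i+1, q i) : (ℕ × ℕ) ⊕ ℕ) ∉ α →
      ∃ v, ded (chainPaths m n t p q) α v := by
    intro i
    induction i using Nat.strong_induction_on with
    | _ i ih =>
    rintro ⟨a0, ha0⟩ hP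
    set Ai : Finset ℕ := (Finset.range (n i)).filter (fun a => Sum.inl (i, a) ∈ α) with hAidef
    have hmemAi : ∀ c, Sum.inl (i, c) ∈ α → c ∈ Ai := by
      intro c hc
      exact Finset.mem_filter.2 ⟨Finset.mem_range.2 (hmem' i c hc).2.1, hc⟩
    have hAine : Ai.Nonempty := ⟨a0, hmemAi _ ha0⟩
    have him : i < m := (hmem' i a0 ha0).1
    set amin := Ai.min' hAine with hamin
    set amax := Ai.max' hAine with hamax
    have hminα : Sum.inl (i, amin) ∈ α := (Finset.mem_filter.1 (Ai.min'_mem hAine)).2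
    have hmaxα : Sum.inl (i, amax) ∈ α := (Finset.mem_filter.1 (Ai.max'_mem hAine)).2
    have hminn : amin < n i := (hmem' i amin hminα).2.1
    have hmaxn : amax < n i := (hmem' i amax hmaxα).2.1
    have hminmax : amin ≤ amax := Finset.min'_le _ _ (Ai.max'_mem hAine)
    by_cases h0 : amin = 0
    · -- the minimum is 0: t i must be the other endpoint, go right from the max
      have h0α : Sum.inl (i, 0) ∈ α := by rw [← h0]; exact hminα
      have ht0 : (0 : ℕ) ≠ t i := (hmem' i 0 h0α).2.2
      have hti : t i = n i - 1 := by
        rcases ht i him with h | h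
        · exact absurd h.symm ht0
        · exact h
      have hmaxt : amax ≠ t i := (hmem' i amax hmaxα).2.2
      have hmaxlt : amax + 1 < n i := by omega
      by_cases hb : ∃ k, i = k + 1 ∧ amax + 1 = q k ∧ Sum.inl (k, p k) ∈ α
      · obtain ⟨k, hik, hqk, hpk⟩ := hb
        refine ih k (by omega) ⟨p k, hpk⟩ ?_
        intro hc
        rw [← hik, ← hqk] at hc
        have := Finset.le_max' Ai _ (hmemAi _ hc)
        omega
      · refine ⟨Sum.inl (i, amax + 1), ded_of ?_ hmaxα ?_ ?_⟩
        · intro hc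
          have := Finset.le_max' Ai _ (hmemAi _ hc)
          omega
        · exact ((chain_adj_step him rfl hmaxlt)).symm
        · intro x hx hadj
          obtain ⟨j, b, rfl, hjm, hbn, hbt⟩ := hmem x hx
          rcases chain_adj_cases hadj with (⟨hij, _, hab, _⟩ | ⟨hj, _, hpi, hbq⟩) |
              (⟨hji, _, hba, _⟩ | ⟨hij, _, hbp, haq⟩)
          · -- b = amax + 2, impossible
            exfalso
            subst hij
            have := Finset.le_max' Ai _ (hmemAi _ hx)
            omega
          · -- x = inl (i+1, q i), contradicts hP
            exfalso
            subst hj; subst hbq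
            exact hP hx
          · -- b + 1 = amax + 1, so x is the unique neighbor
            subst hji
            have : b = amax := by omega
            rw [this]
          · -- incoming bridge, contradicts ¬hb
            exfalso
            subst hbp
            exact hb ⟨j, hij, haq, hx⟩
    · -- the minimum is positive: go left from the min
      have h1 : 1 ≤ amin := Nat.pos_of_ne_zero h0
      by_cases hb : ∃ k, i = k + 1 ∧ amin - 1 = q k ∧ Sum.inl (k, p k) ∈ α
      · obtain ⟨k, hik, hqk, hpk⟩ := hb
        refine ih k (by omega) ⟨p k, hpk⟩ ?_
        intro hc
        rw [← hik, ← hqk] at hc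
        have := Finset.min'_le Ai _ (hmemAi _ hc)
        omega
      · refine ⟨Sum.inl (i, amin - 1), ded_of ?_ hminα ?_ ?_⟩
        · intro hc
          have := Finset.min'_le Ai _ (hmemAi _ hc)
          omega
        · exact chain_adj_step him (by omega) hminn
        · intro x hx hadj
          obtain ⟨j, b, rfl, hjm, hbn, hbt⟩ := hmem x hx
          rcases chain_adj_cases hadj with (⟨hij, _, hab, _⟩ | ⟨hj, _, hpi, hbq⟩) |
              (⟨hji, _, hba, _⟩ | ⟨hij, _, hbp, haq⟩)
          · -- b = amin, the unique neighbor
            subst hij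
            have : b = amin := by omega
            rw [this]
          · -- x = inl (i+1, q i), contradicts hP
            exfalso
            subst hj; subst hbq
            exact hP hx
          · -- b = amin - 2, impossible
            exfalso
            subst hji
            have := Finset.min'_le Ai _ (hmemAi _ hx)
            omega
          · -- incoming bridge, contradicts ¬hb
            exfalso
            subst hbp
            exact hb ⟨j, hij, haq, hx⟩
  -- conclude: apply `key` to the maximal occupied component index
  obtain ⟨w, hw⟩ := hαne
  obtain ⟨i0, a0, rfl, hi0, _, _⟩ := hmem w hw
  set J : Finset ℕ := (Finset.range m).filter (fun i => ∃ a, Sum.inl (i, a) ∈ α) with hJdef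
  have hJne : J.Nonempty := ⟨i0, Finset.mem_filter.2 ⟨Finset.mem_range.2 hi0, a0, hw⟩⟩
  set imax := J.max' hJne with himax
  have himaxJ := Finset.mem_filter.1 (J.max'_mem hJne)
  refine key imax himaxJ.2 ?_
  intro hc
  have h1 := hmem' _ _ hc
  have : imax + 1 ∈ J := Finset.mem_filter.2 ⟨Finset.mem_range.2 h1.1, q imax, hc⟩
  have := Finset.le_max' J _ this
  omega
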